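/- Let p, q ∈ ℝ² (identified with ℂ) have polar coordinates p = r_p e^{iψ_p}, q = r_q e^{iψ_q} with r_p, r_q ≥ 0 and ψ_p, ψ_q ∈ [0,2π). Define r(s) := s r_q + (1−s) r_p, ψ(s) := s ψ_q + (1−s) ψ_p, and γ(s) := r(s) e^{iψ(s)} for s ∈ [0,1]. Then ∫₀¹ |γ'(s)| ds ≤ |r_p − r_q| + 2π max{r_p, r_q}. -/

import Mathlib

/-- Arc length estimate for the interpolating curve in polar coordinates:
if `p = rp e^{iψp}` and `q = rq e^{iψq}` with `rp, rq ≥ 0` and `ψp, ψq ∈ [0, 2π)`,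
then the curve `γ(s) = (s rq + (1-s) rp) e^{i(s ψq + (1-s) ψp)}` has Euclidean
length at most `|rp - rq| + 2π max{rp, rq}`. -/
theorem arc_length_estimate (p q : ℂ) (rp rq ψp ψq : ℝ)
    (hrp : 0 ≤ rp) (hrq : 0 ≤ rq)
    (hψp : ψp ∈ Set.Ico 0 (2 * Real.pi)) (hψq : ψq ∈ Set.Ico 0 (2 * Real.pi))
    (hp : p = (rp : ℂ) * Complex.exp ((ψp : ℂ) * Complex.I))
    (hq : q = (rq : ℂ) * Complex.exp ((ψq : ℂ) * Complex.I)) :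
    (∫ s in (0:ℝ)..1,
        ‖deriv (fun s : ℝ =>
          ((s * rq + (1 - s) * rp : ℝ) : ℂ) *
            Complex.exp (((s * ψq + (1 - s) * ψp : ℝ) : ℂ) * Complex.I)) s‖)
      ≤ |rp - rq| + 2 * Real.pi * max rp rq := by
  set g : ℝ → ℂ := fun s =>
    ((rq - rp : ℝ) : ℂ) * Complex.exp (((s * ψq + (1 - s) * ψp : ℝ) : ℂ) * Complex.I) +
    ((s * rq + (1 - s) * rp : ℝ) : ℂ) *
      (Complex.exp (((s * ψq + (1 - s) * ψp : ℝ) : ℂ) * Complex.I) * (((ψq - ψp : ℝ) : ℂ) * Complex.I))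
    with hg
  have hderiv : ∀ s : ℝ, HasDerivAt (fun s : ℝ =>
      ((s * rq + (1 - s) * rp : ℝ) : ℂ) *
        Complex.exp (((s * ψq + (1 - s) * ψp : ℝ) : ℂ) * Complex.I)) (g s) s := by
    intro s
    have h1 : HasDerivAt (fun s : ℝ => s * rq + (1 - s) * rp) (rq - rp) s := by
      have := ((hasDerivAt_id s).mul_const rq).add
        (((hasDerivAt_const s (1:ℝ)).sub (hasDerivAt_id s)).mul_const rp)
      exact this.congr_deriv (by ring)
    have h2 : HasDerivAt (fun s : ℝ => s * ψq + (1 - s) * ψp) (ψq - ψp) s := by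
      have := ((hasDerivAt_id s).mul_const ψq).add
        (((hasDerivAt_const s (1:ℝ)).sub (hasDerivAt_id s)).mul_const ψp)
      exact this.congr_deriv (by ring)
    have h3 : HasDerivAt (fun s : ℝ => (((s * ψq + (1 - s) * ψp : ℝ) : ℂ) * Complex.I))
        (((ψq - ψp : ℝ) : ℂ) * Complex.I) s := h2.ofReal_comp.mul_const Complex.I
    have h4 := h3.cexp
    exact (h1.ofReal_comp).mul h4
  have hbound : ∀ s ∈ Set.Icc (0:ℝ) 1,
      ‖g s‖ ≤ |rp - rq| + 2 * Real.pi * max rp rq := by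
    intro s hs
    obtain ⟨hs0, hs1⟩ := hs
    have hexp : ∀ θ : ℝ, ‖Complex.exp ((θ : ℂ) * Complex.I)‖ = 1 := fun θ => by
      simpa using Complex.abs_exp_ofReal_mul_I θ
    have hrs : 0 ≤ s * rq + (1 - s) * rp := by
      have h1 := mul_nonneg hs0 hrq
      have h2 := mul_nonneg (by linarith : (0:ℝ) ≤ 1 - s) hrp
      linarith
    have hrsmax : s * rq + (1 - s) * rp ≤ max rp rq := by
      have h1 : rq ≤ max rp rq := le_max_right _ _
      have h2 : rp ≤ max rp rq := le_max_left _ _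
      nlinarith
    have hψ : |ψq - ψp| ≤ 2 * Real.pi := by
      rw [abs_le]
      constructor <;> [linarith [hψp.2, hψq.1]; linarith [hψq.2, hψp.1]]
    calc ‖g s‖ ≤ ‖((rq - rp : ℝ) : ℂ) *
            Complex.exp (((s * ψq + (1 - s) * ψp : ℝ) : ℂ) * Complex.I)‖ +
          ‖((s * rq + (1 - s) * rp : ℝ) : ℂ) *
            (Complex.exp (((s * ψq + (1 - s) * ψp : ℝ) : ℂ) * Complex.I) *
              (((ψq - ψp : ℝ) : ℂ) * Complex.I))‖ := norm_add_le _ _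
      _ = |rq - rp| + (s * rq + (1 - s) * rp) * |ψq - ψp| := by
          simp only [norm_mul, hexp, Complex.norm_I, Complex.norm_real, Real.norm_eq_abs]
          rw [abs_of_nonneg hrs]; ring
      _ ≤ |rp - rq| + 2 * Real.pi * max rp rq := by
          rw [abs_sub_comm]
          have : (s * rq + (1 - s) * rp) * |ψq - ψp| ≤ max rp rq * (2 * Real.pi) := by
            apply mul_le_mul hrsmax hψ (abs_nonneg _) (le_trans hrs hrsmax)
          linarith
  have hc1 : Continuous fun s : ℝ => s * ψq + (1 - s) * ψp :=
    (continuous_id.mul continuous_const).add ((continuous_const.sub continuous_id).mul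
      continuous_const)
  have hc2 : Continuous fun s : ℝ => s * rq + (1 - s) * rp :=
    (continuous_id.mul continuous_const).add ((continuous_const.sub continuous_id).mul
      continuous_const)
  have hce : Continuous fun s : ℝ =>
      Complex.exp (((s * ψq + (1 - s) * ψp : ℝ) : ℂ) * Complex.I) :=
    ((Complex.continuous_ofReal.comp hc1).mul continuous_const).cexp
  have hcg : Continuous g :=
    (continuous_const.mul hce).add ((Complex.continuous_ofReal.comp hc2).mul
      (hce.mul continuous_const))
  have heq : (∫ s in (0:ℝ)..1,
        ‖deriv (fun s : ℝ =>
          ((s * rq + (1 - s) * rp : ℝ) : ℂ) *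
            Complex.exp (((s * ψq + (1 - s) * ψp : ℝ) : ℂ) * Complex.I)) s‖)
      = ∫ s in (0:ℝ)..1, ‖g s‖ := by
    apply intervalIntegral.integral_congr
    intro s _
    simp only [(hderiv s).deriv]
  rw [heq]
  calc (∫ s in (0:ℝ)..1, ‖g s‖)
      ≤ ∫ s in (0:ℝ)..1, (|rp - rq| + 2 * Real.pi * max rp rq) := by
        apply intervalIntegral.integral_mono_on (by norm_num)
        · exact hcg.norm.intervalIntegrable _ _
        · exact intervalIntegrable_const
        · exact hbound
    _ = |rp - rq| + 2 * Real.pi * max rp rq := by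
        rw [intervalIntegral.integral_const]
        norm_num
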